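/- The arithmetic function g defined by g(n) = (-1)^n Σ_{d | n} (-1)^d d³ for positive integers n is multiplicative; that is, g(1) = 1 and g(mn) = g(m) g(n) whenever m and n are coprime positive integers. -/

import Mathlib

/-- `g n = (-1)^n * ∑_{d ∣ n} (-1)^d d³`, summed over the positive divisors of `n`. -/
def g (n : ℕ) : ℤ := (-1) ^ n * ∑ d ∈ n.divisors, (-1) ^ d * (d : ℤ) ^ 3

private lemma neg_one_pow_mod (j k : ℕ) (h : j % 2 = k % 2) : (-1 : ℤ) ^ j = (-1) ^ k := by
  rcases Nat.even_or_odd j with hj | hj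
  · have hj' := Nat.even_iff.mp hj
    have hk : Even k := by rw [Nat.even_iff]; omega
    rw [hj.neg_one_pow, hk.neg_one_pow]
  · have hj' := Nat.odd_iff.mp hj
    have hk : Odd k := by rw [Nat.odd_iff]; omega
    rw [hj.neg_one_pow, hk.neg_one_pow]

private lemma parity_key {m n a b : ℕ} (ha : a ∣ m) (hb : b ∣ n) (hc : Nat.Coprime m n) :
    (-1 : ℤ) ^ (m * n + a * b) = (-1) ^ (m + n + a + b) := by
  apply neg_one_pow_mod
  have h1 : a % 2 = 0 → m % 2 = 0 := by
    intro h
    have : 2 ∣ m := dvd_trans (Nat.dvd_of_mod_eq_zero h) ha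
    omega
  have h2 : b % 2 = 0 → n % 2 = 0 := by
    intro h
    have : 2 ∣ n := dvd_trans (Nat.dvd_of_mod_eq_zero h) hb
    omega
  have h3 : ¬(m % 2 = 0 ∧ n % 2 = 0) := by
    rintro ⟨hm, hn⟩
    have : 2 ∣ Nat.gcd m n := Nat.dvd_gcd (Nat.dvd_of_mod_eq_zero hm) (Nat.dvd_of_mod_eq_zero hn)
    rw [hc] at this
    omega
  have hmn := Nat.mul_mod m n 2
  have hab := Nat.mul_mod a b 2
  rcases Nat.mod_two_eq_zero_or_one m with hm | hm <;>
    rcases Nat.mod_two_eq_zero_or_one n with hn | hn <;>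
    rcases Nat.mod_two_eq_zero_or_one a with ha' | ha' <;>
    rcases Nat.mod_two_eq_zero_or_one b with hb' | hb' <;>
    simp [hm, hn, ha', hb'] at hmn hab ⊢ <;> omega

private lemma sum_divisors_mul_coprime (f : ℕ → ℤ) {m n : ℕ} (hm : 0 < m) (hn : 0 < n)
    (hc : Nat.Coprime m n) :
    ∑ d ∈ (m * n).divisors, f d
      = ∑ p ∈ m.divisors ×ˢ n.divisors, f (p.1 * p.2) := by
  refine Finset.sum_nbij' (fun d => (Nat.gcd d m, Nat.gcd d n)) (fun p => p.1 * p.2) ?_ ?_ ?_ ?_ ?_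
  · intro d hd
    rw [Nat.mem_divisors] at hd
    rw [Finset.mem_product, Nat.mem_divisors, Nat.mem_divisors]
    exact ⟨⟨Nat.gcd_dvd_right d m, hm.ne'⟩, ⟨Nat.gcd_dvd_right d n, hn.ne'⟩⟩
  · intro p hp
    rw [Finset.mem_product, Nat.mem_divisors, Nat.mem_divisors] at hp
    rw [Nat.mem_divisors]
    exact ⟨mul_dvd_mul hp.1.1 hp.2.1, mul_ne_zero hm.ne' hn.ne'⟩
  · intro d hd
    rw [Nat.mem_divisors] at hd
    exact Nat.gcd_mul_gcd_eq_iff_dvd_mul_of_coprime hc |>.mpr hd.1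
  · intro p hp
    rw [Finset.mem_product, Nat.mem_divisors, Nat.mem_divisors] at hp
    obtain ⟨⟨ha, _⟩, ⟨hb, _⟩⟩ := hp
    have hbm : Nat.Coprime p.2 m := Nat.Coprime.coprime_dvd_left hb hc.symm
    have han : Nat.Coprime p.1 n := Nat.Coprime.coprime_dvd_left ha hc
    have e1 : Nat.gcd (p.1 * p.2) m = p.1 := by
      rw [hbm.gcd_mul_right_cancel p.1, Nat.gcd_eq_left ha]
    have e2 : Nat.gcd (p.1 * p.2) n = p.2 := by
      rw [han.gcd_mul_left_cancel p.2, Nat.gcd_eq_left hb]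
    show ((p.1 * p.2).gcd m, (p.1 * p.2).gcd n) = p
    rw [e1, e2]
  · intro d hd
    rw [Nat.mem_divisors] at hd
    rw [Nat.gcd_mul_gcd_eq_iff_dvd_mul_of_coprime hc |>.mpr hd.1]

/-- The arithmetic function `g` is multiplicative. -/
theorem g_multiplicative :
    g 1 = 1 ∧
      ∀ m n : ℕ, 0 < m → 0 < n → Nat.Coprime m n → g (m * n) = g m * g n := by
  constructor
  · simp [g]
  · intro m n hm hn hc
    unfold g
    rw [sum_divisors_mul_coprime _ hm hn hc, Finset.mul_sum, mul_mul_mul_comm,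
      Finset.sum_mul_sum, ← Finset.sum_product', Finset.mul_sum]
    refine Finset.sum_congr rfl ?_
    rintro ⟨a, b⟩ hp
    rw [Finset.mem_product, Nat.mem_divisors, Nat.mem_divisors] at hp
    have key := parity_key hp.1.1 hp.2.1 hc
    push_cast
    linear_combination ((a : ℤ) ^ 3 * (b : ℤ) ^ 3) * key
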